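/- Let A be a finite set of real numbers and let D = {d_1 < d_2 < ... < d_{|D|}} be the set of positive elements of A - A. Suppose a, a' ∈ A with a' < a and the number of elements of A + A - A lying in the half-open interval (a', a] is at most N. Then a - a' ≤ d_N. -/

import Mathlib

/-- Equidistribution lemma: let `D = {d_1 < d_2 < ...}` be the set of positive
differences of a finite set `A ⊂ ℝ`. If `a', a ∈ A` with `a' < a` and at most
`N` elements of `A + A - A` lie in `(a', a]`, then `a - a' ≤ d_N`. -/
theorem stmt_4 (A D : Finset ℝ)
    (hD : D = ((A ×ˢ A).image (fun p => p.1 - p.2)).filter (fun x => 0 < x))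
    (m : ℕ) (hm : D.card = m) (N : ℕ) (hN1 : 1 ≤ N) (hNm : N ≤ m)
    (a a' : ℝ) (ha : a ∈ A) (ha' : a' ∈ A) (haa : a' < a)
    (hcount : (((A ×ˢ A ×ˢ A).image (fun p => p.1 + p.2.1 - p.2.2)).filter
        (fun x => a' < x ∧ x ≤ a)).card ≤ N) :
    a - a' ≤ (D.orderIsoOfFin hm ⟨N - 1, by omega⟩ : ℝ) := by
  by_contra h
  push_neg at h
  set f := D.orderIsoOfFin hm with hf
  set S := D.filter (fun d => d ≤ a - a') with hS
  -- upper bound on S.card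
  have hScard : S.card ≤ N := by
    refine le_trans ?_ hcount
    apply Finset.card_le_card_of_injOn (fun d => a' + d)
    · intro d hd
      simp only [hS, Finset.mem_coe, Finset.mem_filter] at hd
      obtain ⟨hdD, hdle⟩ := hd
      rw [hD] at hdD
      simp only [Finset.mem_filter, Finset.mem_image, Finset.mem_product] at hdD
      obtain ⟨⟨⟨x, y⟩, ⟨hx, hy⟩, hxy⟩, hdpos⟩ := hdD
      simp only [Finset.mem_coe, Finset.mem_filter]
      refine ⟨?_, by linarith, by linarith⟩
      refine Finset.mem_image.2 ⟨(x, a', y), ?_, ?_⟩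
      · simp only [Finset.mem_product]
        exact ⟨hx, ha', hy⟩
      · simp only at hxy ⊢
        linarith
    · intro x _ y _ hxy
      simpa using hxy
  -- lower bound: the N smallest elements of D plus a - a' all lie in S
  have hmemS : ∀ j : Fin N, ((f ⟨j, by omega⟩ : {x // x ∈ D}) : ℝ) ∈ S := by
    intro j
    simp only [hS, Finset.mem_filter]
    refine ⟨(f ⟨j, by omega⟩).2, ?_⟩
    have hle : (f ⟨(j : ℕ), by omega⟩ : {x // x ∈ D}) ≤ f ⟨N - 1, by omega⟩ := by
      apply f.monotone
      have := j.2
      exact Fin.mk_le_mk.2 (by omega)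
    have : ((f ⟨(j : ℕ), by omega⟩ : {x // x ∈ D}) : ℝ) ≤
        ((f ⟨N - 1, by omega⟩ : {x // x ∈ D}) : ℝ) := hle
    linarith
  have haaD : a - a' ∈ S := by
    simp only [hS, Finset.mem_filter]
    refine ⟨?_, le_refl _⟩
    rw [hD]
    simp only [Finset.mem_filter, Finset.mem_image, Finset.mem_product]
    exact ⟨⟨(a, a'), ⟨ha, ha'⟩, rfl⟩, by linarith⟩
  set T := (Finset.univ : Finset (Fin N)).image
      (fun j : Fin N => ((f ⟨j, by omega⟩ : {x // x ∈ D}) : ℝ)) with hT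
  have hTcard : T.card = N := by
    rw [hT, Finset.card_image_of_injective _ ?_, Finset.card_univ, Fintype.card_fin]
    intro i j hij
    have : (⟨(i : ℕ), by omega⟩ : Fin m) = ⟨(j : ℕ), by omega⟩ :=
      f.injective (Subtype.coe_injective hij)
    exact Fin.ext (by simpa using Fin.mk.inj_iff.1 this)
  have hnotmem : a - a' ∉ T := by
    rw [hT]
    simp only [Finset.mem_image, Finset.mem_univ, true_and]
    rintro ⟨j, hj⟩
    have hle : (f ⟨(j : ℕ), by omega⟩ : {x // x ∈ D}) ≤ f ⟨N - 1, by omega⟩ := by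
      apply f.monotone
      have := j.2
      exact Fin.mk_le_mk.2 (by omega)
    have : ((f ⟨(j : ℕ), by omega⟩ : {x // x ∈ D}) : ℝ) ≤
        ((f ⟨N - 1, by omega⟩ : {x // x ∈ D}) : ℝ) := hle
    linarith [hj ▸ this]
  have hsub : insert (a - a') T ⊆ S := by
    intro x hx
    rcases Finset.mem_insert.1 hx with rfl | hx
    · exact haaD
    · rw [hT] at hx
      obtain ⟨j, _, rfl⟩ := Finset.mem_image.1 hx
      exact hmemS j
  have := Finset.card_le_card hsub
  rw [Finset.card_insert_of_notMem hnotmem, hTcard] at this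
  omega
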